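/- For every n ≥ 3: (i) for every PFA with n states and every subset S of size 3 of the state set, if some word carefully synchronizes S then the shortest such word has length at most C(n,3) + C(n,2); and (ii) there exists a PFA with n states and a subset S of size 3 whose shortest carefully synchronizing word has length exactly C(n,3) + C(n,2). Hence the maximum careful synchronization length for state subsets of size 3 in PFAs with n states is C(n,3) + C(n,2), where C denotes the binomial coefficient. -/
import Mathlib


/-- Action of a PFA (partial) transition function on a subset of states along a word:
one step maps `S` to `{δ q a : q ∈ S}` if `δ q a` is defined for all `q ∈ S`,
and to `∅` otherwise. -/
def pfaRun {n m : ℕ} (δ : Fin n → Fin m → Option (Fin n)) :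
    Finset (Fin n) → List (Fin m) → Finset (Fin n)
  | S, [] => S
  | S, a :: w =>
      pfaRun δ
        (if ∀ q ∈ S, (δ q a).isSome then S.image (fun q => (δ q a).getD q) else ∅) w

/-- A word `w` carefully synchronizes the subset `S` in the PFA `δ`. -/
def pfaSync {n m : ℕ} (δ : Fin n → Fin m → Option (Fin n)) (S : Finset (Fin n))
    (w : List (Fin m)) : Prop :=
  (pfaRun δ S w).card = 1

/-- `l` is the length of a shortest word carefully synchronizing `S` in the PFA `δ`. -/
def pfaShortestSync {n m : ℕ} (δ : Fin n → Fin m → Option (Fin n)) (S : Finset (Fin n))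
    (l : ℕ) : Prop :=
  (∃ w, pfaSync δ S w ∧ w.length = l) ∧ ∀ w, pfaSync δ S w → l ≤ w.length

namespace Stmt6

variable {n m : ℕ}

@[simp] lemma pfaRun_nil (δ : Fin n → Fin m → Option (Fin n)) (S : Finset (Fin n)) :
    pfaRun δ S [] = S := rfl

lemma pfaRun_cons (δ : Fin n → Fin m → Option (Fin n)) (S : Finset (Fin n)) (a : Fin m)
    (w : List (Fin m)) :
    pfaRun δ S (a :: w) =
      pfaRun δ (if ∀ q ∈ S, (δ q a).isSome then S.image (fun q => (δ q a).getD q) else ∅) w :=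
  rfl

lemma pfaRun_empty (δ : Fin n → Fin m → Option (Fin n)) (w : List (Fin m)) :
    pfaRun δ ∅ w = ∅ := by
  induction w with
  | nil => rfl
  | cons a w ih =>
      rw [pfaRun_cons, if_pos]
      · simpa using ih
      · intro q hq; exact absurd hq (Finset.notMem_empty q)

lemma pfaRun_append (δ : Fin n → Fin m → Option (Fin n)) (S : Finset (Fin n))
    (u v : List (Fin m)) :
    pfaRun δ S (u ++ v) = pfaRun δ (pfaRun δ S u) v := by
  induction u generalizing S with
  | nil => rfl
  | cons a u ih => rw [List.cons_append, pfaRun_cons, pfaRun_cons, ih]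

lemma card_pfaRun_le (δ : Fin n → Fin m → Option (Fin n)) (S : Finset (Fin n))
    (w : List (Fin m)) : (pfaRun δ S w).card ≤ S.card := by
  induction w generalizing S with
  | nil => simp
  | cons a w ih =>
      rw [pfaRun_cons]
      split
      · exact le_trans (ih _) (Finset.card_image_le)
      · exact le_trans (ih _) (by simp)

/-- Part (i): the upper bound. -/
theorem upper_bound (δ : Fin n → Fin m → Option (Fin n)) (S : Finset (Fin n))
    (h3 : S.card = 3) (hex : ∃ w, pfaSync δ S w) :
    ∃ w, pfaSync δ S w ∧ w.length ≤ n.choose 3 + n.choose 2 := by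
  classical
  have hP : ∃ L, ∃ w, pfaSync δ S w ∧ w.length = L := by
    obtain ⟨w, hw⟩ := hex; exact ⟨w.length, w, hw, rfl⟩
  set L := Nat.find hP with hLdef
  obtain ⟨w, hw, hwlen⟩ := Nat.find_spec hP
  have hmin : ∀ L' < L, ¬ ∃ w', pfaSync δ S w' ∧ w'.length = L' := fun L' h => Nat.find_min hP h
  refine ⟨w, hw, ?_⟩
  rw [hwlen]
  -- V t = set after t steps
  set V : ℕ → Finset (Fin n) := fun t => pfaRun δ S (w.take t) with hV
  have hVlast : ∀ t, pfaRun δ (V t) (w.drop t) = pfaRun δ S w := by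
    intro t; rw [hV]; rw [← pfaRun_append, List.take_append_drop]
  have hcardle : ∀ t, (V t).card ≤ 3 := fun t => h3 ▸ card_pfaRun_le δ S _
  have hcardge : ∀ t < L, 2 ≤ (V t).card := by
    intro t ht
    by_contra hlt
    push_neg at hlt
    interval_cases hc : (V t).card
    · -- card 0 : V t = ∅
      have h0 : V t = ∅ := Finset.card_eq_zero.mp hc
      have : pfaRun δ S w = ∅ := by rw [← hVlast t, h0, pfaRun_empty]
      rw [pfaSync, this] at hw; simp at hw
    · -- card 1 : take t is a shorter sync word
      have hsync : pfaSync δ S (w.take t) := hc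
      have hlen : (w.take t).length = t := by
        rw [List.length_take]; omega
      exact (hmin t ht) ⟨w.take t, hsync, hlen⟩
  have hinj : Set.InjOn V ↑(Finset.range L) := by
    intro s hs t ht hst
    simp only [Finset.coe_range, Set.mem_Iio] at hs ht
    by_contra hne
    -- wlog s < t
    rcases Nat.lt_or_ge s t with hlt | hge
    · have hw' : pfaSync δ S (w.take s ++ w.drop t) := by
        rw [pfaSync, pfaRun_append]
        have hst' : pfaRun δ S (List.take s w) = V t := hst
        rw [hst', hVlast t]; exact hw
      have hlen' : (w.take s ++ w.drop t).length < L := by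
        rw [List.length_append, List.length_take, List.length_drop]
        omega
      exact (hmin _ hlen') ⟨_, hw', rfl⟩
    · have hlt : t < s := by omega
      have hw' : pfaSync δ S (w.take t ++ w.drop s) := by
        rw [pfaSync, pfaRun_append]
        have hst' : pfaRun δ S (List.take t w) = V s := hst.symm
        rw [hst', hVlast s]; exact hw
      have hlen' : (w.take t ++ w.drop s).length < L := by
        rw [List.length_append, List.length_take, List.length_drop]
        omega
      exact (hmin _ hlen') ⟨_, hw', rfl⟩
  have hmaps : ∀ t ∈ Finset.range L,
      V t ∈ Finset.powersetCard 2 (Finset.univ : Finset (Fin n)) ∪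
            Finset.powersetCard 3 Finset.univ := by
    intro t ht
    rw [Finset.mem_range] at ht
    have h2 := hcardge t ht
    have h3' := hcardle t
    rw [Finset.mem_union, Finset.mem_powersetCard, Finset.mem_powersetCard]
    interval_cases hc : (V t).card
    · exact Or.inl ⟨Finset.subset_univ _, rfl⟩
    · exact Or.inr ⟨Finset.subset_univ _, rfl⟩
  have hcount := Finset.card_le_card_of_injOn V hmaps hinj
  rw [Finset.card_range] at hcount
  have hdisj : Disjoint (Finset.powersetCard 2 (Finset.univ : Finset (Fin n)))
      (Finset.powersetCard 3 Finset.univ) := by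
    rw [Finset.disjoint_left]
    intro U hU2 hU3
    rw [Finset.mem_powersetCard] at hU2 hU3
    omega
  rw [Finset.card_union_of_disjoint hdisj, Finset.card_powersetCard,
    Finset.card_powersetCard, Finset.card_univ, Fintype.card_fin] at hcount
  omega


/-! Potential functions -/

def phi2 (n i j : ℕ) : ℕ := (n - j) + (n - 1 - i).choose 2

def phi3 (n i j k : ℕ) : ℕ :=
  n.choose 2 + (n - k) + (n - 1 - j).choose 2 + (n.choose 3 - (n - i).choose 3)

/-! Transition maps (on ℕ values). -/

def tim (n x y z q : ℕ) : ℕ :=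
  if z + 1 < n then (if q = z then z + 1 else q)
  else if y + 2 < n then (if q = y then y + 1 else if q = z then y + 2 else q)
  else if 1 ≤ x then (if q = x then x - 1 else if q = y then x else x + 1)
  else (if q = x then 0 else 1)

def pim (n x y q : ℕ) : ℕ :=
  if y + 1 < n then (if q = y then y + 1 else q)
  else if x + 2 < n then (if q = x then x + 1 else x + 2)
  else 0

/-! Arithmetic lemmas -/

lemma choose2_succ (m : ℕ) : (m + 1).choose 2 = m + m.choose 2 := by
  rw [Nat.choose_succ_succ, Nat.choose_one_right]

lemma choose3_succ (m : ℕ) : (m + 1).choose 3 = m.choose 2 + m.choose 3 :=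
  Nat.choose_succ_succ m 2

lemma choose3_le {a n : ℕ} (h : a ≤ n) : a.choose 3 ≤ n.choose 3 :=
  Nat.choose_le_choose 3 h

lemma phi3_stepA {n i j k : ℕ} (hk : k + 1 < n) :
    phi3 n i j (k + 1) + 1 = phi3 n i j k := by
  unfold phi3
  generalize (n - 1 - j).choose 2 = A
  generalize n.choose 3 - (n - i).choose 3 = B
  omega

lemma phi3_stepB {n i j : ℕ} (hj : j + 2 < n) :
    phi3 n i (j + 1) (j + 2) + 1 = phi3 n i j (n - 1) := by
  unfold phi3
  have h1 : n - 1 - (j + 1) = n - j - 2 := by omega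
  have h2 : n - 1 - j = (n - j - 2) + 1 := by omega
  rw [h1, h2, choose2_succ]
  generalize (n - j - 2).choose 2 = A
  generalize n.choose 3 - (n - i).choose 3 = B
  omega

lemma phi3_stepC {n i : ℕ} (h1 : 1 ≤ i) (h2 : i < n - 2) :
    phi3 n (i - 1) i (i + 1) + 1 = phi3 n i (n - 2) (n - 1) := by
  unfold phi3
  have e1 : n - (i - 1) = (n - i) + 1 := by omega
  have e2 : n - 1 - i = n - i - 1 := by omega
  have e3 : n - 1 - (n - 2) = 1 := by omega
  have e4 : (n - i) = (n - i - 1) + 1 := by omega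
  rw [e1, e2, e3, choose3_succ]
  have e5 : (n - i).choose 2 = (n - i - 1) + (n - i - 1).choose 2 := by
    conv_lhs => rw [e4]
    rw [choose2_succ]
  rw [e5]
  have hb2 : (n - i - 1) + (n - i - 1).choose 2 + (n - i).choose 3 ≤ n.choose 3 := by
    have h' : ((n - i) + 1).choose 3 ≤ n.choose 3 := choose3_le (by omega)
    rw [choose3_succ, e5] at h'
    omega
  have h12 : (1 : ℕ).choose 2 = 0 := rfl
  rw [h12]
  omega

lemma phi3_last {n : ℕ} (hn : 3 ≤ n) :
    phi2 n 0 1 + 1 = phi3 n 0 (n - 2) (n - 1) := by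
  unfold phi2 phi3
  have e1 : n - 1 - (n - 2) = 1 := by omega
  have e2 : n - (n - 1) = 1 := by omega
  have e3 : n - 0 = n := by omega
  have e4 : n = (n - 1) + 1 := by omega
  have e5 : n.choose 2 = (n - 1) + (n - 1).choose 2 := by
    conv_lhs => rw [e4]; rw [choose2_succ]
  rw [e1, e2, e3, e5]
  simp [Nat.sub_self]

lemma phi2_stepA {n i j : ℕ} (h : j + 1 < n) :
    phi2 n i (j + 1) + 1 = phi2 n i j := by
  unfold phi2
  generalize (n - 1 - i).choose 2 = A
  omega

lemma phi2_stepB {n i : ℕ} (h : i + 2 < n) :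
    phi2 n (i + 1) (i + 2) + 1 = phi2 n i (n - 1) := by
  unfold phi2
  have e1 : n - 1 - (i + 1) = n - i - 2 := by omega
  have e2 : n - 1 - i = (n - i - 2) + 1 := by omega
  rw [e1, e2, choose2_succ]
  omega

lemma phi2_last {n : ℕ} (hn : 3 ≤ n) : phi2 n (n - 2) (n - 1) = 1 := by
  unfold phi2
  have e1 : n - (n - 1) = 1 := by omega
  have e2 : n - 1 - (n - 2) = 1 := by omega
  rw [e1, e2]
  rfl

lemma phi2_jumpB2 {n i j : ℕ} (h : j + 2 < n) :
    phi2 n i (n - 1) ≤ phi2 n i (j + 2) := by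
  unfold phi2
  generalize (n - 1 - i).choose 2 = A
  omega

lemma phi2_jumpC1 {n i : ℕ} (h1 : 1 ≤ i) (h2 : i < n - 2) :
    phi2 n i (n - 2) ≤ phi2 n (i - 1) i + 1 := by
  unfold phi2
  have e1 : n - 1 - (i - 1) = (n - i - 1) + 1 := by omega
  have e2 : n - 1 - i = n - i - 1 := by omega
  rw [e1, e2, choose2_succ]
  omega

lemma phi2_jumpC2 {n i : ℕ} (h1 : 1 ≤ i) (h2 : i < n - 2) :
    phi2 n i (n - 1) ≤ phi2 n (i - 1) (i + 1) + 1 := by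
  unfold phi2
  have e1 : n - 1 - (i - 1) = (n - i - 1) + 1 := by omega
  have e2 : n - 1 - i = n - i - 1 := by omega
  rw [e1, e2, choose2_succ]
  omega

lemma phi2_jumpD {n j : ℕ} (h1 : 1 ≤ j) (h2 : j < n) :
    phi2 n 0 j ≤ phi2 n 0 1 + 1 := by
  unfold phi2
  generalize (n - 1 - 0).choose 2 = A
  omega

lemma phi2_pos {n i j : ℕ} (h : j < n) : 1 ≤ phi2 n i j := by
  unfold phi2; omega

lemma phi3_init {n : ℕ} (hn : 3 ≤ n) :
    phi3 n (n - 3) (n - 2) (n - 1) = n.choose 3 + n.choose 2 := by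
  unfold phi3
  have e1 : n - (n - 1) = 1 := by omega
  have e2 : n - 1 - (n - 2) = 1 := by omega
  have e3 : n - (n - 3) = 3 := by omega
  have h1 : (1 : ℕ).choose 2 = 0 := rfl
  have h3 : (3 : ℕ).choose 3 = 1 := rfl
  have hz : 1 ≤ n.choose 3 := by
    calc 1 = (3:ℕ).choose 3 := rfl
    _ ≤ n.choose 3 := choose3_le hn
  rw [e1, e2, e3, h1, h3]
  omega


/-! Fin helpers -/

def mkv (n : ℕ) (h : 0 < n) (a : ℕ) : Fin n := ⟨a % n, Nat.mod_lt a h⟩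

lemma mkv_val {n : ℕ} (h : 0 < n) {a : ℕ} (ha : a < n) : (mkv n h a).val = a :=
  Nat.mod_eq_of_lt ha

lemma mkv_lt {n : ℕ} (h : 0 < n) {a b : ℕ} (hab : a < b) (hb : b < n) :
    mkv n h a < mkv n h b := by
  rw [Fin.lt_def, mkv_val h (by omega), mkv_val h hb]; exact hab

lemma card2 {n : ℕ} {a b : Fin n} (h : a < b) : ({a, b} : Finset (Fin n)).card = 2 := by
  rw [Finset.card_insert_of_notMem (by simp [Finset.mem_singleton]; exact Fin.ne_of_lt h),
    Finset.card_singleton]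

lemma card3 {n : ℕ} {a b c : Fin n} (h1 : a < b) (h2 : b < c) :
    ({a, b, c} : Finset (Fin n)).card = 3 := by
  rw [Finset.card_insert_of_notMem, card2 h2]
  simp only [Finset.mem_insert, Finset.mem_singleton]
  push_neg
  exact ⟨Fin.ne_of_lt h1, Fin.ne_of_lt (h1.trans h2)⟩

lemma triple_ext {n : ℕ} {a b c x y z : Fin n} (hab : a < b) (hbc : b < c)
    (hxy : x < y) (hyz : y < z) (h : ({a, b, c} : Finset (Fin n)) = {x, y, z}) :
    a = x ∧ b = y ∧ c = z := by
  have ha : a = x ∨ a = y ∨ a = z := by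
    have : a ∈ ({x, y, z} : Finset (Fin n)) := h ▸ (by simp)
    simpa using this
  have hb : b = x ∨ b = y ∨ b = z := by
    have : b ∈ ({x, y, z} : Finset (Fin n)) := h ▸ (by simp)
    simpa using this
  have hc : c = x ∨ c = y ∨ c = z := by
    have : c ∈ ({x, y, z} : Finset (Fin n)) := h ▸ (by simp)
    simpa using this
  have hx : x = a ∨ x = b ∨ x = c := by
    have : x ∈ ({a, b, c} : Finset (Fin n)) := h ▸ (by simp)
    simpa using this
  have hz : z = a ∨ z = b ∨ z = c := by
    have : z ∈ ({a, b, c} : Finset (Fin n)) := h ▸ (by simp)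
    simpa using this
  simp only [Fin.ext_iff] at ha hb hc hx hz ⊢
  rw [Fin.lt_def] at hab hbc hxy hyz
  omega

lemma pair_ext {n : ℕ} {a b x y : Fin n} (hab : a < b) (hxy : x < y)
    (h : ({a, b} : Finset (Fin n)) = {x, y}) : a = x ∧ b = y := by
  have ha : a = x ∨ a = y := by
    have : a ∈ ({x, y} : Finset (Fin n)) := h ▸ (by simp)
    simpa using this
  have hb : b = x ∨ b = y := by
    have : b ∈ ({x, y} : Finset (Fin n)) := h ▸ (by simp)
    simpa using this
  have hx : x = a ∨ x = b := by
    have : x ∈ ({a, b} : Finset (Fin n)) := h ▸ (by simp)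
    simpa using this
  simp only [Fin.ext_iff] at ha hb hx ⊢
  rw [Fin.lt_def] at hab hxy
  omega

lemma pair_sub_ext {n : ℕ} {a b x y z : Fin n} (hab : a < b) (hxy : x < y) (hyz : y < z)
    (h : ({a, b} : Finset (Fin n)) ⊆ {x, y, z}) :
    (a = x ∧ b = y) ∨ (a = x ∧ b = z) ∨ (a = y ∧ b = z) := by
  have ha : a = x ∨ a = y ∨ a = z := by
    have : a ∈ ({x, y, z} : Finset (Fin n)) := h (by simp)
    simpa using this
  have hb : b = x ∨ b = y ∨ b = z := by
    have : b ∈ ({x, y, z} : Finset (Fin n)) := h (by simp)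
    simpa using this
  simp only [Fin.ext_iff] at ha hb ⊢
  rw [Fin.lt_def] at hab hxy hyz
  omega

/-! The PFA. -/

def domA {n : ℕ} (x y z : Fin n) : Finset (Fin n) :=
  if x < y ∧ y < z then {x, y, z} else if x < y ∧ y = z then {x, y} else ∅

def EQn (n : ℕ) : Fin n × Fin n × Fin n ≃ Fin (n * (n * n)) :=
  (Equiv.prodCongr (Equiv.refl (Fin n)) finProdFinEquiv).trans finProdFinEquiv

def gval (n : ℕ) (x y z q : Fin n) : ℕ :=
  if x < y ∧ y < z then tim n x.val y.val z.val q.val else pim n x.val y.val q.val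

def delta (n : ℕ) (h : 0 < n) : Fin n → Fin (n * (n * n)) → Option (Fin n) := fun q e =>
  if q ∈ domA ((EQn n).symm e).1 ((EQn n).symm e).2.1 ((EQn n).symm e).2.2 then
    some (mkv n h (gval n ((EQn n).symm e).1 ((EQn n).symm e).2.1 ((EQn n).symm e).2.2 q))
  else none

lemma delta_decode {n : ℕ} (h : 0 < n) {e : Fin (n * (n * n))} {x y z : Fin n}
    (hd : (EQn n).symm e = (x, y, z)) (q : Fin n) :
    delta n h q e = if q ∈ domA x y z then some (mkv n h (gval n x y z q)) else none := by
  rw [delta, hd]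

lemma delta_encode {n : ℕ} (h : 0 < n) (x y z q : Fin n) :
    delta n h q (EQn n (x, y, z)) =
      if q ∈ domA x y z then some (mkv n h (gval n x y z q)) else none :=
  delta_decode h (Equiv.symm_apply_apply _ _) q

/-! Master minimality lemma. -/

theorem lower_master {n : ℕ} (hn : 3 ≤ n) (h : 0 < n) (w : List (Fin (n * (n * n)))) :
    (∀ i j k : ℕ, i < j → j < k → k < n →
      (pfaRun (delta n h) {mkv n h i, mkv n h j, mkv n h k} w).card = 1 →
        phi3 n i j k ≤ w.length) ∧
    (∀ i j : ℕ, i < j → j < n →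
      (pfaRun (delta n h) {mkv n h i, mkv n h j} w).card = 1 →
        phi2 n i j ≤ w.length) := by
  induction w with
  | nil =>
      constructor
      · intro i j k hij hjk hk hcard
        rw [pfaRun_nil] at hcard
        rw [card3 (mkv_lt h hij (by omega)) (mkv_lt h hjk hk)] at hcard
        omega
      · intro i j hij hj hcard
        rw [pfaRun_nil] at hcard
        rw [card2 (mkv_lt h hij hj)] at hcard
        omega
  | cons e w ih =>
      obtain ⟨⟨x, y, z⟩, hd⟩ : ∃ p, (EQn n).symm e = p := ⟨_, rfl⟩
      constructor
      · intro i j k hij hjk hk hcard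
        have hik : i < k := hij.trans hjk
        rw [pfaRun_cons] at hcard
        by_cases hdom : ∀ q ∈ ({mkv n h i, mkv n h j, mkv n h k} : Finset (Fin n)),
            ((delta n h) q e).isSome
        swap
        · rw [if_neg hdom, pfaRun_empty] at hcard; simp at hcard
        rw [if_pos hdom] at hcard
        have hsub : ({mkv n h i, mkv n h j, mkv n h k} : Finset (Fin n)) ⊆ domA x y z := by
          intro q hq
          have hq' := hdom q hq
          rw [delta_decode h hd] at hq'
          by_contra hq''
          rw [if_neg hq''] at hq'
          simp at hq'
        by_cases h1 : x < y ∧ y < z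
        swap
        · exfalso
          have hle := Finset.card_le_card hsub
          rw [card3 (mkv_lt h hij (by omega)) (mkv_lt h hjk hk)] at hle
          unfold domA at hle
          rw [if_neg h1] at hle
          by_cases h2 : x < y ∧ y = z
          · rw [if_pos h2] at hle
            have h2' := Finset.card_insert_le x ({y} : Finset (Fin n))
            simp at h2'
            omega
          · rw [if_neg h2] at hle
            simp at hle
        have hdomA : domA x y z = {x, y, z} := by unfold domA; rw [if_pos h1]
        rw [hdomA] at hsub
        have hUeq : ({mkv n h i, mkv n h j, mkv n h k} : Finset (Fin n)) = {x, y, z} := by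
          apply Finset.eq_of_subset_of_card_le hsub
          rw [card3 (mkv_lt h hij (by omega)) (mkv_lt h hjk hk)]
          calc ({x, y, z} : Finset (Fin n)).card
              ≤ ({y, z} : Finset (Fin n)).card + 1 := Finset.card_insert_le _ _
            _ ≤ ({z} : Finset (Fin n)).card + 1 + 1 := by
                have := Finset.card_insert_le y ({z} : Finset (Fin n)); omega
            _ ≤ 3 := by simp
        obtain ⟨ex, ey, ez⟩ := triple_ext (mkv_lt h hij (by omega)) (mkv_lt h hjk hk)
          h1.1 h1.2 hUeq
        have hx : x.val = i := by rw [← ex, mkv_val h (by omega)]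
        have hy : y.val = j := by rw [← ey, mkv_val h (by omega)]
        have hz : z.val = k := by rw [← ez, mkv_val h hk]
        have hmemx : x ∈ domA x y z := by rw [hdomA]; simp
        have hmemy : y ∈ domA x y z := by rw [hdomA]; simp
        have hmemz : z ∈ domA x y z := by rw [hdomA]; simp
        have hf : ∀ q ∈ domA x y z,
            ((delta n h) q e).getD q = mkv n h (tim n i j k q.val) := by
          intro q hq
          rw [delta_decode h hd, if_pos hq, Option.getD_some, gval, if_pos h1, hx, hy, hz]
        have himg : Finset.image (fun q => ((delta n h) q e).getD q)
            ({mkv n h i, mkv n h j, mkv n h k} : Finset (Fin n)) =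
            {mkv n h (tim n i j k i), mkv n h (tim n i j k j), mkv n h (tim n i j k k)} := by
          rw [hUeq, Finset.image_insert, Finset.image_insert, Finset.image_singleton,
            hf x hmemx, hf y hmemy, hf z hmemz, hx, hy, hz]
        rw [himg] at hcard
        rw [List.length_cons]
        by_cases hbr1 : k + 1 < n
        · have t1 : tim n i j k i = i := by unfold tim; rw [if_pos hbr1, if_neg (by omega)]
          have t2 : tim n i j k j = j := by unfold tim; rw [if_pos hbr1, if_neg (by omega)]
          have t3 : tim n i j k k = k + 1 := by unfold tim; rw [if_pos hbr1, if_pos rfl]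
          rw [t1, t2, t3] at hcard
          have hres := (ih.1) i j (k + 1) hij (by omega) hbr1 hcard
          rw [← phi3_stepA hbr1]
          omega
        · have hk1 : k = n - 1 := by omega
          by_cases hbr2 : j + 2 < n
          · have t1 : tim n i j k i = i := by
              unfold tim; rw [if_neg hbr1, if_pos hbr2, if_neg (by omega), if_neg (by omega)]
            have t2 : tim n i j k j = j + 1 := by
              unfold tim; rw [if_neg hbr1, if_pos hbr2, if_pos rfl]
            have t3 : tim n i j k k = j + 2 := by
              unfold tim; rw [if_neg hbr1, if_pos hbr2, if_neg (by omega), if_pos rfl]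
            rw [t1, t2, t3] at hcard
            have hres := (ih.1) i (j + 1) (j + 2) (by omega) (by omega) hbr2 hcard
            rw [hk1, ← phi3_stepB hbr2]
            omega
          · have hj1 : j = n - 2 := by omega
            by_cases hbr3 : 1 ≤ i
            · have t1 : tim n i j k i = i - 1 := by
                unfold tim; rw [if_neg hbr1, if_neg hbr2, if_pos hbr3, if_pos rfl]
              have t2 : tim n i j k j = i := by
                unfold tim
                rw [if_neg hbr1, if_neg hbr2, if_pos hbr3, if_neg (by omega), if_pos rfl]
              have t3 : tim n i j k k = i + 1 := by
                unfold tim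
                rw [if_neg hbr1, if_neg hbr2, if_pos hbr3, if_neg (by omega), if_neg (by omega)]
              rw [t1, t2, t3] at hcard
              have hres := (ih.1) (i - 1) i (i + 1) (by omega) (by omega) (by omega) hcard
              rw [hk1, hj1, ← phi3_stepC hbr3 (by omega)]
              omega
            · have hi0 : i = 0 := by omega
              have t1 : tim n i j k i = 0 := by
                unfold tim; rw [if_neg hbr1, if_neg hbr2, if_neg hbr3, if_pos (by omega)]
              have t2 : tim n i j k j = 1 := by
                unfold tim; rw [if_neg hbr1, if_neg hbr2, if_neg hbr3, if_neg (by omega)]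
              have t3 : tim n i j k k = 1 := by
                unfold tim; rw [if_neg hbr1, if_neg hbr2, if_neg hbr3, if_neg (by omega)]
              rw [t1, t2, t3] at hcard
              have hcol : ({mkv n h 0, mkv n h 1, mkv n h 1} : Finset (Fin n)) =
                  {mkv n h 0, mkv n h 1} := by
                rw [show (insert (mkv n h 1) {mkv n h 1} : Finset (Fin n)) = {mkv n h 1} from
                  Finset.insert_eq_self.mpr (Finset.mem_singleton_self _)]
              rw [hcol] at hcard
              have hres := (ih.2) 0 1 (by omega) (by omega) hcard
              rw [hk1, hj1, hi0, ← phi3_last hn]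
              omega
      · intro i j hij hj hcard
        rw [pfaRun_cons] at hcard
        by_cases hdom : ∀ q ∈ ({mkv n h i, mkv n h j} : Finset (Fin n)),
            ((delta n h) q e).isSome
        swap
        · rw [if_neg hdom, pfaRun_empty] at hcard; simp at hcard
        rw [if_pos hdom] at hcard
        have hsub : ({mkv n h i, mkv n h j} : Finset (Fin n)) ⊆ domA x y z := by
          intro q hq
          have hq' := hdom q hq
          rw [delta_decode h hd] at hq'
          by_contra hq''
          rw [if_neg hq''] at hq'
          simp at hq'
        rw [List.length_cons]
        by_cases h1 : x < y ∧ y < z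
        · -- pair inside a triple domain
          have hdomA : domA x y z = {x, y, z} := by unfold domA; rw [if_pos h1]
          rw [hdomA] at hsub
          have hmemx : x ∈ domA x y z := by rw [hdomA]; simp
          have hmemy : y ∈ domA x y z := by rw [hdomA]; simp
          have hmemz : z ∈ domA x y z := by rw [hdomA]; simp
          have hf : ∀ q ∈ domA x y z,
              ((delta n h) q e).getD q = mkv n h (tim n x.val y.val z.val q.val) := by
            intro q hq
            rw [delta_decode h hd, if_pos hq, Option.getD_some, gval, if_pos h1]
          have hyz : y.val < z.val := h1.2
          have hxy : x.val < y.val := h1.1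
          have hzn : z.val < n := z.isLt
          rcases pair_sub_ext (mkv_lt h hij hj) h1.1 h1.2 hsub with
            ⟨e1, e2⟩ | ⟨e1, e2⟩ | ⟨e1, e2⟩
          · -- (i,j) = (x,y); put c := z.val
            have hxv : x.val = i := by rw [← e1, mkv_val h (by omega)]
            have hyv : y.val = j := by rw [← e2, mkv_val h hj]
            set c := z.val with hc
            have hjc : j < c := by omega
            have himg : Finset.image (fun q => ((delta n h) q e).getD q)
                ({mkv n h i, mkv n h j} : Finset (Fin n)) =
                {mkv n h (tim n i j c i), mkv n h (tim n i j c j)} := by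
              rw [e1, e2, Finset.image_insert, Finset.image_singleton,
                hf x hmemx, hf y hmemy, hxv, hyv]
            rw [himg] at hcard
            by_cases hbr1 : c + 1 < n
            · have t1 : tim n i j c i = i := by unfold tim; rw [if_pos hbr1, if_neg (by omega)]
              have t2 : tim n i j c j = j := by unfold tim; rw [if_pos hbr1, if_neg (by omega)]
              rw [t1, t2] at hcard
              have hres := (ih.2) i j hij hj hcard
              omega
            · by_cases hbr2 : j + 2 < n
              · have t1 : tim n i j c i = i := by
                  unfold tim; rw [if_neg hbr1, if_pos hbr2, if_neg (by omega), if_neg (by omega)]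
                have t2 : tim n i j c j = j + 1 := by
                  unfold tim; rw [if_neg hbr1, if_pos hbr2, if_pos rfl]
                rw [t1, t2] at hcard
                have hres := (ih.2) i (j + 1) (by omega) (by omega) hcard
                rw [← phi2_stepA (by omega : j + 1 < n)]
                omega
              · have hj2 : j = n - 2 := by omega
                by_cases hbr3 : 1 ≤ i
                · have t1 : tim n i j c i = i - 1 := by
                    unfold tim; rw [if_neg hbr1, if_neg hbr2, if_pos hbr3, if_pos rfl]
                  have t2 : tim n i j c j = i := by
                    unfold tim
                    rw [if_neg hbr1, if_neg hbr2, if_pos hbr3, if_neg (by omega), if_pos rfl]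
                  rw [t1, t2] at hcard
                  have hres := (ih.2) (i - 1) i (by omega) (by omega) hcard
                  have := phi2_jumpC1 hbr3 (by omega : i < n - 2)
                  rw [hj2]
                  omega
                · have hi0 : i = 0 := by omega
                  have t1 : tim n i j c i = 0 := by
                    unfold tim; rw [if_neg hbr1, if_neg hbr2, if_neg hbr3, if_pos (by omega)]
                  have t2 : tim n i j c j = 1 := by
                    unfold tim; rw [if_neg hbr1, if_neg hbr2, if_neg hbr3, if_neg (by omega)]
                  rw [t1, t2] at hcard
                  have hres := (ih.2) 0 1 (by omega) (by omega) hcard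
                  have := phi2_jumpD (n := n) (j := j) (by omega) hj
                  rw [hi0] at *
                  omega
          · -- (i,j) = (x,z); put b := y.val
            have hxv : x.val = i := by rw [← e1, mkv_val h (by omega)]
            have hzv : z.val = j := by rw [← e2, mkv_val h hj]
            set b := y.val with hb
            have hib : i < b := by omega
            have hbj : b < j := by omega
            have himg : Finset.image (fun q => ((delta n h) q e).getD q)
                ({mkv n h i, mkv n h j} : Finset (Fin n)) =
                {mkv n h (tim n i b j i), mkv n h (tim n i b j j)} := by
              rw [e1, e2, Finset.image_insert, Finset.image_singleton,
                hf x hmemx, hf z hmemz, hxv, hzv]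
            rw [himg] at hcard
            by_cases hbr1 : j + 1 < n
            · have t1 : tim n i b j i = i := by unfold tim; rw [if_pos hbr1, if_neg (by omega)]
              have t2 : tim n i b j j = j + 1 := by unfold tim; rw [if_pos hbr1, if_pos rfl]
              rw [t1, t2] at hcard
              have hres := (ih.2) i (j + 1) (by omega) hbr1 hcard
              rw [← phi2_stepA hbr1]
              omega
            · have hj2 : j = n - 1 := by omega
              by_cases hbr2 : b + 2 < n
              · have t1 : tim n i b j i = i := by
                  unfold tim; rw [if_neg hbr1, if_pos hbr2, if_neg (by omega), if_neg (by omega)]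
                have t2 : tim n i b j j = b + 2 := by
                  unfold tim; rw [if_neg hbr1, if_pos hbr2, if_neg (by omega), if_pos rfl]
                rw [t1, t2] at hcard
                have hres := (ih.2) i (b + 2) (by omega) hbr2 hcard
                have := phi2_jumpB2 (i := i) hbr2
                rw [hj2]
                omega
              · have hb2 : b = n - 2 := by omega
                by_cases hbr3 : 1 ≤ i
                · have t1 : tim n i b j i = i - 1 := by
                    unfold tim; rw [if_neg hbr1, if_neg hbr2, if_pos hbr3, if_pos rfl]
                  have t2 : tim n i b j j = i + 1 := by
                    unfold tim
                    rw [if_neg hbr1, if_neg hbr2, if_pos hbr3, if_neg (by omega), if_neg (by omega)]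
                  rw [t1, t2] at hcard
                  have hres := (ih.2) (i - 1) (i + 1) (by omega) (by omega) hcard
                  have := phi2_jumpC2 hbr3 (by omega : i < n - 2)
                  rw [hj2]
                  omega
                · have hi0 : i = 0 := by omega
                  have t1 : tim n i b j i = 0 := by
                    unfold tim; rw [if_neg hbr1, if_neg hbr2, if_neg hbr3, if_pos (by omega)]
                  have t2 : tim n i b j j = 1 := by
                    unfold tim; rw [if_neg hbr1, if_neg hbr2, if_neg hbr3, if_neg (by omega)]
                  rw [t1, t2] at hcard
                  have hres := (ih.2) 0 1 (by omega) (by omega) hcard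
                  have := phi2_jumpD (n := n) (j := j) (by omega) hj
                  rw [hi0] at *
                  omega
          · -- (i,j) = (y,z); put a := x.val
            have hyv : y.val = i := by rw [← e1, mkv_val h (by omega)]
            have hzv : z.val = j := by rw [← e2, mkv_val h hj]
            set a := x.val with ha
            have hai : a < i := by omega
            have himg : Finset.image (fun q => ((delta n h) q e).getD q)
                ({mkv n h i, mkv n h j} : Finset (Fin n)) =
                {mkv n h (tim n a i j i), mkv n h (tim n a i j j)} := by
              rw [e1, e2, Finset.image_insert, Finset.image_singleton,
                hf y hmemy, hf z hmemz, hyv, hzv]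
            rw [himg] at hcard
            by_cases hbr1 : j + 1 < n
            · have t1 : tim n a i j i = i := by
                unfold tim; rw [if_pos hbr1, if_neg (by omega)]
              have t2 : tim n a i j j = j + 1 := by unfold tim; rw [if_pos hbr1, if_pos rfl]
              rw [t1, t2] at hcard
              have hres := (ih.2) i (j + 1) (by omega) hbr1 hcard
              rw [← phi2_stepA hbr1]
              omega
            · have hj2 : j = n - 1 := by omega
              by_cases hbr2 : i + 2 < n
              · have t1 : tim n a i j i = i + 1 := by
                  unfold tim; rw [if_neg hbr1, if_pos hbr2, if_pos rfl]
                have t2 : tim n a i j j = i + 2 := by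
                  unfold tim; rw [if_neg hbr1, if_pos hbr2, if_neg (by omega), if_pos rfl]
                rw [t1, t2] at hcard
                have hres := (ih.2) (i + 1) (i + 2) (by omega) hbr2 hcard
                rw [hj2, ← phi2_stepB hbr2]
                omega
              · have hi2 : i = n - 2 := by omega
                rw [hi2, hj2, phi2_last hn]
                omega
        · by_cases h2 : x < y ∧ y = z
          · -- pair domain
            have hdomA : domA x y z = {x, y} := by unfold domA; rw [if_neg h1, if_pos h2]
            rw [hdomA] at hsub
            have hUeq : ({mkv n h i, mkv n h j} : Finset (Fin n)) = {x, y} := by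
              apply Finset.eq_of_subset_of_card_le hsub
              rw [card2 (mkv_lt h hij hj)]
              have := Finset.card_insert_le x ({y} : Finset (Fin n))
              simp at this ⊢
              omega
            obtain ⟨ex, ey⟩ := pair_ext (mkv_lt h hij hj) h2.1 hUeq
            have hxv : x.val = i := by rw [← ex, mkv_val h (by omega)]
            have hyv : y.val = j := by rw [← ey, mkv_val h hj]
            have hmemx : x ∈ domA x y z := by rw [hdomA]; simp
            have hmemy : y ∈ domA x y z := by rw [hdomA]; simp
            have hf : ∀ q ∈ domA x y z,
                ((delta n h) q e).getD q = mkv n h (pim n i j q.val) := by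
              intro q hq
              rw [delta_decode h hd, if_pos hq, Option.getD_some, gval, if_neg h1, hxv, hyv]
            have himg : Finset.image (fun q => ((delta n h) q e).getD q)
                ({mkv n h i, mkv n h j} : Finset (Fin n)) =
                {mkv n h (pim n i j i), mkv n h (pim n i j j)} := by
              rw [hUeq, Finset.image_insert, Finset.image_singleton,
                hf x hmemx, hf y hmemy, hxv, hyv]
            rw [himg] at hcard
            by_cases hbr1 : j + 1 < n
            · have t1 : pim n i j i = i := by unfold pim; rw [if_pos hbr1, if_neg (by omega)]
              have t2 : pim n i j j = j + 1 := by unfold pim; rw [if_pos hbr1, if_pos rfl]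
              rw [t1, t2] at hcard
              have hres := (ih.2) i (j + 1) (by omega) hbr1 hcard
              rw [← phi2_stepA hbr1]
              omega
            · have hj2 : j = n - 1 := by omega
              by_cases hbr2 : i + 2 < n
              · have t1 : pim n i j i = i + 1 := by
                  unfold pim; rw [if_neg hbr1, if_pos hbr2, if_pos rfl]
                have t2 : pim n i j j = i + 2 := by
                  unfold pim; rw [if_neg hbr1, if_pos hbr2, if_neg (by omega)]
                rw [t1, t2] at hcard
                have hres := (ih.2) (i + 1) (i + 2) (by omega) hbr2 hcard
                rw [hj2, ← phi2_stepB hbr2]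
                omega
              · have hi2 : i = n - 2 := by omega
                rw [hi2, hj2, phi2_last hn]
                omega
          · -- empty domain: impossible
            exfalso
            have hdomA : domA x y z = ∅ := by unfold domA; rw [if_neg h1, if_neg h2]
            rw [hdomA] at hsub
            exact absurd (hsub (Finset.mem_insert_self _ _)) (Finset.notMem_empty _)



/-! Existence of the synchronizing word of exactly the right length. -/

lemma run_step_triple {n : ℕ} (h : 0 < n) {i j k : ℕ} (hij : i < j) (hjk : j < k)
    (hk : k < n) (w : List (Fin (n * (n * n)))) :
    pfaRun (delta n h) ({mkv n h i, mkv n h j, mkv n h k} : Finset (Fin n))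
      (EQn n (mkv n h i, mkv n h j, mkv n h k) :: w) =
    pfaRun (delta n h)
      ({mkv n h (tim n i j k i), mkv n h (tim n i j k j), mkv n h (tim n i j k k)} :
        Finset (Fin n)) w := by
  have h1 : mkv n h i < mkv n h j ∧ mkv n h j < mkv n h k :=
    ⟨mkv_lt h hij (by omega), mkv_lt h hjk hk⟩
  have hdomA : domA (mkv n h i) (mkv n h j) (mkv n h k) =
      {mkv n h i, mkv n h j, mkv n h k} := by
    unfold domA; rw [if_pos h1]
  have hx : (mkv n h i).val = i := mkv_val h (by omega)
  have hy : (mkv n h j).val = j := mkv_val h (by omega)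
  have hz : (mkv n h k).val = k := mkv_val h hk
  have hg : ∀ q : Fin n, gval n (mkv n h i) (mkv n h j) (mkv n h k) q = tim n i j k q.val := by
    intro q; rw [gval, if_pos h1, hx, hy, hz]
  rw [pfaRun_cons, if_pos]
  · congr 1
    rw [Finset.image_insert, Finset.image_insert, Finset.image_singleton]
    rw [delta_encode h, if_pos (by rw [hdomA]; simp), Option.getD_some, hg, hx]
    rw [delta_encode h, if_pos (by rw [hdomA]; simp), Option.getD_some, hg, hy]
    rw [delta_encode h, if_pos (by rw [hdomA]; simp), Option.getD_some, hg, hz]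
  · intro q hq
    rw [delta_encode h, if_pos (by rw [hdomA]; exact hq)]
    simp

lemma run_step_pair {n : ℕ} (h : 0 < n) {i j : ℕ} (hij : i < j) (hj : j < n)
    (w : List (Fin (n * (n * n)))) :
    pfaRun (delta n h) ({mkv n h i, mkv n h j} : Finset (Fin n))
      (EQn n (mkv n h i, mkv n h j, mkv n h j) :: w) =
    pfaRun (delta n h)
      ({mkv n h (pim n i j i), mkv n h (pim n i j j)} : Finset (Fin n)) w := by
  have h1 : ¬ (mkv n h i < mkv n h j ∧ mkv n h j < mkv n h j) := by
    rintro ⟨-, hlt⟩; exact lt_irrefl _ hlt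
  have h2 : mkv n h i < mkv n h j ∧ mkv n h j = mkv n h j := ⟨mkv_lt h hij hj, rfl⟩
  have hdomA : domA (mkv n h i) (mkv n h j) (mkv n h j) = {mkv n h i, mkv n h j} := by
    unfold domA; rw [if_neg h1, if_pos h2]
  have hx : (mkv n h i).val = i := mkv_val h (by omega)
  have hy : (mkv n h j).val = j := mkv_val h hj
  have hg : ∀ q : Fin n, gval n (mkv n h i) (mkv n h j) (mkv n h j) q = pim n i j q.val := by
    intro q; rw [gval, if_neg h1, hx, hy]
  rw [pfaRun_cons, if_pos]
  · congr 1
    rw [Finset.image_insert, Finset.image_singleton]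
    rw [delta_encode h, if_pos (by rw [hdomA]; simp), Option.getD_some, hg, hx]
    rw [delta_encode h, if_pos (by rw [hdomA]; simp), Option.getD_some, hg, hy]
  · intro q hq
    rw [delta_encode h, if_pos (by rw [hdomA]; exact hq)]
    simp

theorem exists_master {n : ℕ} (hn : 3 ≤ n) (h : 0 < n) : ∀ v : ℕ,
    (∀ i j k : ℕ, i < j → j < k → k < n → phi3 n i j k = v →
      ∃ w : List (Fin (n * (n * n))),
        (pfaRun (delta n h) {mkv n h i, mkv n h j, mkv n h k} w).card = 1 ∧ w.length = v) ∧
    (∀ i j : ℕ, i < j → j < n → phi2 n i j = v →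
      ∃ w : List (Fin (n * (n * n))),
        (pfaRun (delta n h) {mkv n h i, mkv n h j} w).card = 1 ∧ w.length = v) := by
  intro v
  induction v using Nat.strong_induction_on with
  | _ v ih =>
    constructor
    · intro i j k hij hjk hk hv
      by_cases hbr1 : k + 1 < n
      · have t1 : tim n i j k i = i := by unfold tim; rw [if_pos hbr1, if_neg (by omega)]
        have t2 : tim n i j k j = j := by unfold tim; rw [if_pos hbr1, if_neg (by omega)]
        have t3 : tim n i j k k = k + 1 := by unfold tim; rw [if_pos hbr1, if_pos rfl]
        have hstep := phi3_stepA (i := i) (j := j) hbr1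
        obtain ⟨w, hw, hlen⟩ := (ih (phi3 n i j (k+1)) (by omega)).1 i j (k+1)
          hij (by omega) hbr1 rfl
        refine ⟨EQn n (mkv n h i, mkv n h j, mkv n h k) :: w, ?_, ?_⟩
        · rw [run_step_triple h hij hjk hk, t1, t2, t3]; exact hw
        · rw [List.length_cons]; omega
      · have hk1 : k = n - 1 := by omega
        by_cases hbr2 : j + 2 < n
        · have t1 : tim n i j k i = i := by
            unfold tim; rw [if_neg hbr1, if_pos hbr2, if_neg (by omega), if_neg (by omega)]
          have t2 : tim n i j k j = j + 1 := by
            unfold tim; rw [if_neg hbr1, if_pos hbr2, if_pos rfl]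
          have t3 : tim n i j k k = j + 2 := by
            unfold tim; rw [if_neg hbr1, if_pos hbr2, if_neg (by omega), if_pos rfl]
          have hstep := phi3_stepB (i := i) hbr2
          rw [← hk1] at hstep
          obtain ⟨w, hw, hlen⟩ := (ih (phi3 n i (j+1) (j+2)) (by omega)).1 i (j+1) (j+2)
            (by omega) (by omega) hbr2 rfl
          refine ⟨EQn n (mkv n h i, mkv n h j, mkv n h k) :: w, ?_, ?_⟩
          · rw [run_step_triple h hij hjk hk, t1, t2, t3]; exact hw
          · rw [List.length_cons]; omega
        · have hj1 : j = n - 2 := by omega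
          by_cases hbr3 : 1 ≤ i
          · have t1 : tim n i j k i = i - 1 := by
              unfold tim; rw [if_neg hbr1, if_neg hbr2, if_pos hbr3, if_pos rfl]
            have t2 : tim n i j k j = i := by
              unfold tim
              rw [if_neg hbr1, if_neg hbr2, if_pos hbr3, if_neg (by omega), if_pos rfl]
            have t3 : tim n i j k k = i + 1 := by
              unfold tim
              rw [if_neg hbr1, if_neg hbr2, if_pos hbr3, if_neg (by omega), if_neg (by omega)]
            have hstep := phi3_stepC (n := n) hbr3 (by omega)
            rw [← hk1, ← hj1] at hstep
            obtain ⟨w, hw, hlen⟩ := (ih (phi3 n (i-1) i (i+1)) (by omega)).1 (i-1) i (i+1)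
              (by omega) (by omega) (by omega) rfl
            refine ⟨EQn n (mkv n h i, mkv n h j, mkv n h k) :: w, ?_, ?_⟩
            · rw [run_step_triple h hij hjk hk, t1, t2, t3]; exact hw
            · rw [List.length_cons]; omega
          · have hi0 : i = 0 := by omega
            have t1 : tim n i j k i = 0 := by
              unfold tim; rw [if_neg hbr1, if_neg hbr2, if_neg hbr3, if_pos (by omega)]
            have t2 : tim n i j k j = 1 := by
              unfold tim; rw [if_neg hbr1, if_neg hbr2, if_neg hbr3, if_neg (by omega)]
            have t3 : tim n i j k k = 1 := by
              unfold tim; rw [if_neg hbr1, if_neg hbr2, if_neg hbr3, if_neg (by omega)]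
            have hstep : phi2 n 0 1 + 1 = v := by
              rw [phi3_last hn, ← hi0, ← hj1, ← hk1]; exact hv
            obtain ⟨w, hw, hlen⟩ := (ih (phi2 n 0 1) (by omega)).2 0 1 (by omega) (by omega) rfl
            refine ⟨EQn n (mkv n h i, mkv n h j, mkv n h k) :: w, ?_, ?_⟩
            · rw [run_step_triple h hij hjk hk, t1, t2, t3]
              rw [show ({mkv n h 0, mkv n h 1, mkv n h 1} : Finset (Fin n)) =
                  {mkv n h 0, mkv n h 1} by
                rw [show (insert (mkv n h 1) {mkv n h 1} : Finset (Fin n)) = {mkv n h 1} from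
                  Finset.insert_eq_self.mpr (Finset.mem_singleton_self _)]]
              exact hw
            · rw [List.length_cons]; omega
    · intro i j hij hj hv
      by_cases hbr1 : j + 1 < n
      · have t1 : pim n i j i = i := by unfold pim; rw [if_pos hbr1, if_neg (by omega)]
        have t2 : pim n i j j = j + 1 := by unfold pim; rw [if_pos hbr1, if_pos rfl]
        have hstep := phi2_stepA (i := i) hbr1
        obtain ⟨w, hw, hlen⟩ := (ih (phi2 n i (j+1)) (by omega)).2 i (j+1)
          (by omega) hbr1 rfl
        refine ⟨EQn n (mkv n h i, mkv n h j, mkv n h j) :: w, ?_, ?_⟩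
        · rw [run_step_pair h hij hj, t1, t2]; exact hw
        · rw [List.length_cons]; omega
      · have hj1 : j = n - 1 := by omega
        by_cases hbr2 : i + 2 < n
        · have t1 : pim n i j i = i + 1 := by
            unfold pim; rw [if_neg hbr1, if_pos hbr2, if_pos rfl]
          have t2 : pim n i j j = i + 2 := by
            unfold pim; rw [if_neg hbr1, if_pos hbr2, if_neg (by omega)]
          have hstep := phi2_stepB (n := n) hbr2
          rw [← hj1] at hstep
          obtain ⟨w, hw, hlen⟩ := (ih (phi2 n (i+1) (i+2)) (by omega)).2 (i+1) (i+2)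
            (by omega) hbr2 rfl
          refine ⟨EQn n (mkv n h i, mkv n h j, mkv n h j) :: w, ?_, ?_⟩
          · rw [run_step_pair h hij hj, t1, t2]; exact hw
          · rw [List.length_cons]; omega
        · have hi2 : i = n - 2 := by omega
          have t1 : pim n i j i = 0 := by
            unfold pim; rw [if_neg hbr1, if_neg hbr2]
          have t2 : pim n i j j = 0 := by
            unfold pim; rw [if_neg hbr1, if_neg hbr2]
          have hv1 : v = 1 := by
            rw [← hv, hi2, hj1, phi2_last hn]
          refine ⟨[EQn n (mkv n h i, mkv n h j, mkv n h j)], ?_, by simp [hv1]⟩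
          rw [run_step_pair h hij hj, t1, t2]
          rw [show ({mkv n h 0, mkv n h 0} : Finset (Fin n)) = {mkv n h 0} from
            Finset.insert_eq_self.mpr (Finset.mem_singleton_self _)]
          rw [pfaRun_nil, Finset.card_singleton]

end Stmt6

theorem stmt6 (n : ℕ) (hn : 3 ≤ n) :
    -- (i) upper bound for every PFA and every subset of size 3
    (∀ (m : ℕ) (δ : Fin n → Fin m → Option (Fin n)) (S : Finset (Fin n)),
      S.card = 3 → (∃ w, pfaSync δ S w) →
        ∃ w, pfaSync δ S w ∧ w.length ≤ n.choose 3 + n.choose 2) ∧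
    -- (ii) the bound is attained
    (∃ (m : ℕ) (δ : Fin n → Fin m → Option (Fin n)) (S : Finset (Fin n)),
      S.card = 3 ∧ pfaShortestSync δ S (n.choose 3 + n.choose 2)) ∧
    -- hence: the maximum careful synchronization length for 3-subsets is the bound
    IsGreatest {l : ℕ | ∃ (m : ℕ) (δ : Fin n → Fin m → Option (Fin n))
        (S : Finset (Fin n)), S.card = 3 ∧ pfaShortestSync δ S l}
      (n.choose 3 + n.choose 2) := by
  have h : 0 < n := by omega
  have h31 : n - 3 < n - 2 := by omega
  have h32 : n - 2 < n - 1 := by omega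
  have h33 : n - 1 < n := by omega
  have hii : ∃ (m : ℕ) (δ : Fin n → Fin m → Option (Fin n)) (S : Finset (Fin n)),
      S.card = 3 ∧ pfaShortestSync δ S (n.choose 3 + n.choose 2) := by
    refine ⟨n * (n * n), Stmt6.delta n h,
      {Stmt6.mkv n h (n - 3), Stmt6.mkv n h (n - 2), Stmt6.mkv n h (n - 1)}, ?_, ?_, ?_⟩
    · exact Stmt6.card3 (Stmt6.mkv_lt h h31 (by omega)) (Stmt6.mkv_lt h h32 h33)
    · obtain ⟨w, hw, hlen⟩ := (Stmt6.exists_master hn h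
        (Stmt6.phi3 n (n - 3) (n - 2) (n - 1))).1 (n - 3) (n - 2) (n - 1) h31 h32 h33 rfl
      exact ⟨w, hw, by rw [hlen, Stmt6.phi3_init hn]⟩
    · intro w hw
      have := (Stmt6.lower_master hn h w).1 (n - 3) (n - 2) (n - 1) h31 h32 h33 hw
      rwa [Stmt6.phi3_init hn] at this
  refine ⟨fun m δ S h3 hex => Stmt6.upper_bound δ S h3 hex, hii, hii, ?_⟩
  rintro l ⟨m, δ, S, hc, ⟨⟨w0, hs0, hl0⟩, hmin⟩⟩
  obtain ⟨w', hw', hle⟩ := Stmt6.upper_bound δ S hc ⟨w0, hs0⟩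
  exact le_trans (hmin w' hw') hle
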